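/- Let A be a reduced commutative Noetherian ring and M a finitely generated A-module such that for every maximal ideal m of A the fiber M ⊗_A A/m is a one-dimensional vector space over A/m. Then M is locally free of rank one over A (i.e., M is projective of constant rank 1). -/

import Mathlib

open scoped TensorProduct

/-- `M` is a finite projective `A`-module of constant rank `n`: it is projective and its
localisation at every prime has (free) rank `n`. -/
def IsProjOfRank (A : Type) [CommRing A] (M : Type) [AddCommGroup M] [Module A M]
    (n : ℕ) : Prop :=
  Module.Projective A M ∧
    ∀ p : PrimeSpectrum A,
      Module.finrank (Localization.AtPrime p.asIdeal)
        (LocalizedModule p.asIdeal.primeCompl M) = n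

/-- In a reduced Jacobson ring, an element annihilating a module with everywhere
one-dimensional fibers must vanish. -/
lemma ann_zero_of_fibers_one_dimensional
    (A : Type) [CommRing A] [IsReduced A] [IsJacobsonRing A]
    (M : Type) [AddCommGroup M] [Module A M]
    (hfib : ∀ (m : Ideal A) (_ : m.IsMaximal),
      Module.finrank (A ⧸ m) ((A ⧸ m) ⊗[A] M) = 1)
    (b : A) (hb : ∀ y : M, b • y = 0) : b = 0 := by
  have hmem : ∀ m : Ideal A, m.IsMaximal → b ∈ m := by
    intro m hm
    by_contra hbm
    haveI := hm
    obtain ⟨c, i, hi, hci⟩ := hm.exists_inv hbm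
    haveI hsub : Subsingleton ((A ⧸ m) ⊗[A] M) := by
      refine subsingleton_of_forall_eq 0 fun z => ?_
      obtain ⟨y, rfl⟩ := TensorProduct.mk_surjective A M (A ⧸ m) Ideal.Quotient.mk_surjective z
      have hz1 : ((c * b : A)) • ((1 : A ⧸ m) ⊗ₜ[A] y) = 0 := by
        rw [← TensorProduct.tmul_smul, mul_smul, hb, smul_zero, TensorProduct.tmul_zero]
      have hz2 : ((i : A)) • ((1 : A ⧸ m) ⊗ₜ[A] y) = 0 := by
        rw [TensorProduct.smul_tmul']
        have h0 : (i • (1 : A ⧸ m)) = 0 := by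
          rw [← Algebra.algebraMap_eq_smul_one, Ideal.Quotient.algebraMap_eq,
            Ideal.Quotient.eq_zero_iff_mem]
          exact hi
        rw [h0, TensorProduct.zero_tmul]
      show TensorProduct.mk A (A ⧸ m) M 1 y = 0
      calc (1 : A ⧸ m) ⊗ₜ[A] y = ((c * b + i : A)) • ((1 : A ⧸ m) ⊗ₜ[A] y) := by
            rw [hci, one_smul]
        _ = 0 := by rw [add_smul, hz1, hz2, add_zero]
    have h1 := hfib m hm
    rw [Module.finrank_zero_of_subsingleton] at h1
    exact one_ne_zero h1.symm
  have hj : (⊥ : Ideal A).jacobson = ⊥ := by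
    refine IsJacobsonRing.out' ⊥ ?_
    have : (⊥ : Ideal A).radical = ⊥ := by
      have := nilradical_eq_zero A
      rwa [nilradical, Ideal.zero_eq_bot] at this
    exact Ideal.radical_eq_iff.mp this
  have hbj : b ∈ (⊥ : Ideal A).jacobson := by
    rw [Ideal.jacobson]
    exact Ideal.mem_sInf.mpr fun {J} hJ => hmem J hJ.2
  rw [hj] at hbj
  simpa using hbj

/-- At each maximal ideal, the localized module is free of rank one. -/
lemma localized_equiv_of_fibers_one_dimensional
    (A : Type) [CommRing A] [IsReduced A] [IsJacobsonRing A]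
    (M : Type) [AddCommGroup M] [Module A M] [Module.Finite A M]
    (hfib : ∀ (m : Ideal A) (_ : m.IsMaximal),
      Module.finrank (A ⧸ m) ((A ⧸ m) ⊗[A] M) = 1)
    (m : Ideal A) (hm : m.IsMaximal) :
    Nonempty ((Localization.AtPrime m) ≃ₗ[Localization.AtPrime m]
      LocalizedModule m.primeCompl M) := by
  classical
  haveI := hm
  haveI := hm.isPrime
  have hv' : ∃ v : (A ⧸ m) ⊗[A] M, v ≠ 0 ∧ ∀ w, ∃ c : (A ⧸ m), c • v = w := by
    letI := Ideal.Quotient.field m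
    exact (finrank_eq_one_iff' (K := A ⧸ m) (V := (A ⧸ m) ⊗[A] M)).mp (hfib m hm)
  obtain ⟨v, hv0, hv⟩ := hv'
  obtain ⟨x, hx⟩ := TensorProduct.mk_surjective A M (A ⧸ m) Ideal.Quotient.mk_surjective v
  -- generation modulo `m • ⊤`
  have hgen : ∀ y : M, ∃ a : A, y - a • x ∈ (m • ⊤ : Submodule A M) := by
    intro y
    obtain ⟨c, hc⟩ := hv ((1 : A ⧸ m) ⊗ₜ[A] y)
    obtain ⟨a, rfl⟩ := Ideal.Quotient.mk_surjective c
    have h1 : (1 : A ⧸ m) ⊗ₜ[A] (a • x) = (1 : A ⧸ m) ⊗ₜ[A] y := by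
      have e1 : (1 : A ⧸ m) ⊗ₜ[A] (a • x)
          = (Ideal.Quotient.mk m a) • ((1 : A ⧸ m) ⊗ₜ[A] x) := by
        rw [← TensorProduct.smul_tmul, TensorProduct.smul_tmul']
        congr 1
      have hx1 : (1 : A ⧸ m) ⊗ₜ[A] x = v := hx
      rw [e1, hx1, hc]
    have e2 : ∀ z : M, (TensorProduct.quotTensorEquivQuotSMul M m) ((1 : A ⧸ m) ⊗ₜ[A] z)
        = Submodule.Quotient.mk z := by
      intro z
      have h1' : (1 : A ⧸ m) = Ideal.Quotient.mk m 1 := (map_one _).symm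
      rw [h1', TensorProduct.quotTensorEquivQuotSMul_mk_tmul, one_smul]
    have h2 := congrArg (TensorProduct.quotTensorEquivQuotSMul M m) h1
    rw [e2, e2] at h2
    have h3 := (Submodule.Quotient.eq _).mp h2
    refine ⟨a, ?_⟩
    have := (m • ⊤ : Submodule A M).neg_mem h3
    rwa [neg_sub] at this
  set R := Localization.AtPrime m with hR
  set Mm := LocalizedModule m.primeCompl M with hMmdef
  haveI : Module.Finite R Mm :=
    Module.Finite.of_isLocalizedModule m.primeCompl (LocalizedModule.mkLinearMap m.primeCompl M)
  set x' : Mm := LocalizedModule.mk x 1 with hx'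
  -- images of `m • ⊤` land in `𝔪 • ⊤`
  have hmk_mem : ∀ w ∈ (m • ⊤ : Submodule A M),
      (LocalizedModule.mk w 1 : Mm) ∈ (IsLocalRing.maximalIdeal R • ⊤ : Submodule R Mm) := by
    intro w hw
    refine Submodule.smul_induction_on hw ?_ ?_
    · intro b hb t _
      have heq : (LocalizedModule.mk (b • t) 1 : Mm)
          = (algebraMap A R b) • LocalizedModule.mk t 1 := by
        rw [algebraMap_smul, LocalizedModule.smul'_mk]
      rw [heq]
      exact Submodule.smul_mem_smul
        ((IsLocalization.AtPrime.to_map_mem_maximal_iff R m b).mpr hb) Submodule.mem_top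
    · intro z w hz hw'
      have heq : (LocalizedModule.mk (z + w) 1 : Mm)
          = LocalizedModule.mk z 1 + LocalizedModule.mk w 1 := by
        rw [LocalizedModule.mk_add_mk]; simp
      rw [heq]
      exact Submodule.add_mem _ hz hw'
  -- every element is in `span {x'} ⊔ 𝔪 • ⊤`
  have hN : ∀ z : Mm,
      z ∈ (Submodule.span R {x'} ⊔ (IsLocalRing.maximalIdeal R • ⊤) : Submodule R Mm) := by
    intro z
    induction z using LocalizedModule.induction_on with
    | h y s =>
      obtain ⟨a, ha⟩ := hgen y
      have hs : (LocalizedModule.mk y s : Mm) = (Localization.mk 1 s) • LocalizedModule.mk y 1 := by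
        rw [LocalizedModule.mk_smul_mk, one_smul, mul_one]
      have hy : (LocalizedModule.mk y 1 : Mm)
          = (algebraMap A R a) • x' + LocalizedModule.mk (y - a • x) 1 := by
        rw [algebraMap_smul, hx', LocalizedModule.smul'_mk, LocalizedModule.mk_add_mk]
        simp
      rw [hs, hy]
      refine Submodule.smul_mem _ _ (Submodule.add_mem _ ?_ ?_)
      · exact Submodule.mem_sup_left
          (Submodule.smul_mem _ _ (Submodule.mem_span_singleton_self x'))
      · exact Submodule.mem_sup_right (hmk_mem _ ha)
  -- nakayama: `x'` generates
  have hspan : Submodule.span R {x'} = ⊤ := by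
    rw [← IsLocalRing.map_mkQ_eq_top, eq_top_iff]
    rintro q -
    obtain ⟨z, rfl⟩ := Submodule.mkQ_surjective _ q
    obtain ⟨n, hn, w, hw, rfl⟩ := Submodule.mem_sup.mp (hN z)
    refine ⟨n, hn, ?_⟩
    have hw0 : Submodule.mkQ (IsLocalRing.maximalIdeal R • ⊤ : Submodule R Mm) w = 0 := by
      rw [Submodule.mkQ_apply, Submodule.Quotient.mk_eq_zero]
      exact hw
    rw [map_add, hw0, add_zero]
  set φ := LinearMap.toSpanSingleton R Mm x' with hφ
  have hsurj : Function.Surjective φ := by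
    rw [← LinearMap.range_eq_top, ← LinearMap.span_singleton_eq_range]
    exact hspan
  have hinj : Function.Injective φ := by
    rw [← LinearMap.ker_eq_bot, eq_bot_iff]
    intro c hc
    have hc0 : c • x' = 0 := hc
    rw [Submodule.mem_bot]
    obtain ⟨⟨a, s⟩, rfl⟩ := IsLocalization.mk'_surjective m.primeCompl c
    dsimp only at hc hc0 ⊢
    have h4 : (LocalizedModule.mk (a • x) s : Mm) = LocalizedModule.mk 0 1 := by
      rw [LocalizedModule.zero_mk]
      rw [← hc0, hx', ← Localization.mk_eq_mk', LocalizedModule.mk_smul_mk, mul_one]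
    obtain ⟨u, hu⟩ := LocalizedModule.mk_eq.mp h4
    have hux : ((u : A) * a) • x = 0 := by
      have := hu
      simp only [one_smul, smul_zero, Submonoid.smul_def, smul_smul] at this
      simpa [mul_comm, mul_assoc, smul_smul] using this
    set b : A := (u : A) * a with hbdef
    have hbx' : b • x' = 0 := by
      rw [hx', LocalizedModule.smul'_mk, hux, LocalizedModule.zero_mk]
    have hbMm : ∀ z : Mm, b • z = 0 := by
      intro z
      have hz : z ∈ Submodule.span R {x'} := hspan ▸ Submodule.mem_top
      obtain ⟨c', rfl⟩ := Submodule.mem_span_singleton.mp hz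
      rw [← algebraMap_smul R b, smul_smul, mul_comm, ← smul_smul, algebraMap_smul, hbx',
        smul_zero]
    have hgen2 : ∀ y : M, ∃ t : m.primeCompl, ((t : A) * b) • y = 0 := by
      intro y
      have h5 : (LocalizedModule.mk (b • y) 1 : Mm) = LocalizedModule.mk 0 1 := by
        rw [← LocalizedModule.smul'_mk, LocalizedModule.zero_mk]
        exact hbMm _
      obtain ⟨t, htt⟩ := LocalizedModule.mk_eq.mp h5
      refine ⟨t, ?_⟩
      simp only [one_smul, smul_zero, Submonoid.smul_def, smul_smul] at htt
      simpa [smul_smul] using htt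
    choose t ht using hgen2
    obtain ⟨S, hS⟩ := Module.Finite.fg_top (R := A) (M := M)
    set f : A := ∏ y ∈ S, (t y : A) with hfdef
    have hfc : f ∈ m.primeCompl := Submonoid.prod_mem _ fun y _ => (t y).2
    have hSy : ∀ y ∈ S, (f * b) • y = 0 := by
      intro y hy
      obtain ⟨g, hg⟩ := Finset.dvd_prod_of_mem (fun y => (t y : A)) hy
      have hfb : f * b = g * ((t y : A) * b) := by rw [hfdef, hg]; ring
      rw [hfb, mul_smul, ht y, smul_zero]
    have hfb : ∀ y : M, (f * b) • y = 0 := by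
      have hle : Submodule.span A (S : Set M) ≤ LinearMap.ker (LinearMap.lsmul A M (f * b)) :=
        Submodule.span_le.mpr fun y hy => by
          simpa [LinearMap.mem_ker] using hSy y hy
      intro y
      have hy : y ∈ Submodule.span A (S : Set M) := by rw [hS]; trivial
      simpa [LinearMap.mem_ker] using hle hy
    have hfbz : f * b = 0 := ann_zero_of_fibers_one_dimensional A M hfib _ hfb
    rw [IsLocalization.mk'_eq_zero_iff]
    refine ⟨⟨f, hfc⟩ * u, ?_⟩
    show (f * (u : A)) * a = 0
    rw [mul_assoc]
    exact hfbz
  exact ⟨LinearEquiv.ofBijective φ ⟨hinj, hsurj⟩⟩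

/-- Let `A` be a reduced Noetherian Jacobson commutative ring and `M` a
finitely generated `A`-module whose fiber at every maximal ideal `m` is a
one-dimensional `A/m`-vector space.  Then `M` is locally free of rank one over `A`. -/
theorem locally_free_rank_one_of_fibers_one_dimensional
    (A : Type) [CommRing A] [IsNoetherianRing A] [IsReduced A] [IsJacobsonRing A]
    (M : Type) [AddCommGroup M] [Module A M] [Module.Finite A M]
    (hfib : ∀ (m : Ideal A) (_ : m.IsMaximal),
      Module.finrank (A ⧸ m) ((A ⧸ m) ⊗[A] M) = 1) :
    IsProjOfRank A M 1 := by
  haveI : Module.FinitePresentation A M := Module.finitePresentation_of_finite A M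
  have key := localized_equiv_of_fibers_one_dimensional A M hfib
  have hproj : Module.Projective A M := by
    apply Module.projective_of_localization_maximal
    intro I hI
    obtain ⟨e⟩ := key I hI
    haveI : Module.Free (Localization.AtPrime I) (LocalizedModule I.primeCompl M) :=
      Module.Free.of_equiv e
    infer_instance
  haveI := hproj
  haveI : Module.Flat A M := inferInstance
  refine ⟨hproj, fun p => ?_⟩
  obtain ⟨mI, hmI, hle⟩ := p.asIdeal.exists_le_maximal p.isPrime.ne_top
  obtain ⟨e⟩ := key mI hmI
  have hlc := Module.isLocallyConstant_rankAtStalk (R := A) (M := M)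
  have hU : IsOpen (Module.rankAtStalk (R := A) M ⁻¹' {1}) := hlc {1}
  have hmem : (⟨mI, hmI.isPrime⟩ : PrimeSpectrum A) ∈ Module.rankAtStalk (R := A) M ⁻¹' {1} := by
    show Module.rankAtStalk (R := A) M ⟨mI, hmI.isPrime⟩ ∈ ({1} : Set ℕ)
    rw [Set.mem_singleton_iff]
    show Module.finrank (Localization.AtPrime mI) (LocalizedModule mI.primeCompl M) = 1
    rw [← e.finrank_eq, Module.finrank_self]
  have hspec : p ⤳ (⟨mI, hmI.isPrime⟩ : PrimeSpectrum A) := by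
    rw [← PrimeSpectrum.le_iff_specializes]
    exact hle
  have hp := hspec.mem_open hU hmem
  simpa [Module.rankAtStalk] using hp
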